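/- (Cross derivatives, part 1.) Let d ≥ r ≥ 0, b : {α ∈ ℕ³ : |α| = d} → ℝ, λ ∈ ℝ³ with λ₁+λ₂+λ₃ = 1, and δ ∈ ℝ³ with δ₁+δ₂+δ₃ = 0. Define f : ℝ → ℝ by f(t) = Σ_{|α|=d} b(α) B_α^d(λ + tδ). Then the r-th derivative of f at t = 0 equals Σ_{|α|=d−r} (d!/(d−r)!) p_α(δ) B_α^{d−r}(λ), where p_α(δ) = Σ_{|β|=r} b(α+β) B_β^r(δ). -/

import Mathlib

open Finset

/-- The trivariate Bernstein polynomial `B_a^d(l) = (d!/(a₁!a₂!a₃!)) l₁^{a₁} l₂^{a₂} l₃^{a₃}`. -/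
noncomputable def Bern (d : ℕ) (a : Fin 3 → ℕ) (l : Fin 3 → ℝ) : ℝ :=
  ((Nat.factorial d : ℝ) /
      ((Nat.factorial (a 0) : ℝ) * (Nat.factorial (a 1) : ℝ) * (Nat.factorial (a 2) : ℝ))) *
    (l 0 ^ a 0 * l 1 ^ a 1 * l 2 ^ a 2)

/-- The `k`-th standard basis multi-index `ε_k` of `ℕ³`. -/
def eps (k : Fin 3) : Fin 3 → ℕ := fun j => if j = k then 1 else 0

/-- The univariate Bernstein polynomial `B_k^n(t) = (n choose k) t^k (1-t)^{n-k}`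
(automatically `0` when `k > n`). -/
noncomputable def bern1 (n k : ℕ) (t : ℝ) : ℝ :=
  (Nat.choose n k : ℝ) * t ^ k * (1 - t) ^ (n - k)

noncomputable def fac3 (a : Fin 3 → ℕ) : ℝ :=
  (Nat.factorial (a 0) : ℝ) * (Nat.factorial (a 1) : ℝ) * (Nat.factorial (a 2) : ℝ)

noncomputable def pw (x : Fin 3 → ℝ) (a : Fin 3 → ℕ) : ℝ := x 0 ^ a 0 * x 1 ^ a 1 * x 2 ^ a 2

lemma Bern_eq (n : ℕ) (a : Fin 3 → ℕ) (x : Fin 3 → ℝ) :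
    Bern n a x = (n.factorial : ℝ) / fac3 a * pw x a := rfl

lemma fac3_ne (a : Fin 3 → ℕ) : fac3 a ≠ 0 := by
  have h0 := (a 0).factorial_pos
  have h1 := (a 1).factorial_pos
  have h2 := (a 2).factorial_pos
  unfold fac3
  positivity

lemma mem_AT {n : ℕ} {a : Fin 3 → ℕ} :
    a ∈ Finset.Nat.antidiagonalTuple 3 n ↔ a 0 + a 1 + a 2 = n := by
  rw [Finset.Nat.mem_antidiagonalTuple, Fin.sum_univ_three]

lemma add_eps_mem {m : ℕ} {β : Fin 3 → ℕ} (k : Fin 3)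
    (hβ : β ∈ Finset.Nat.antidiagonalTuple 3 m) :
    β + eps k ∈ Finset.Nat.antidiagonalTuple 3 (m + 1) := by
  rw [mem_AT] at hβ ⊢
  fin_cases k <;> simp [eps] <;> omega

lemma add_eps_sub (β : Fin 3 → ℕ) (k : Fin 3) : (β + eps k) - eps k = β := by
  funext i; simp [eps]

lemma sub_add_eps {γ : Fin 3 → ℕ} {k : Fin 3} (h : γ k ≠ 0) : (γ - eps k) + eps k = γ := by
  funext i
  by_cases hik : i = k
  · subst hik; simp [eps]; omega
  · simp [eps, hik]

lemma add_eps_apply (β : Fin 3 → ℕ) (k : Fin 3) : (β + eps k) k = β k + 1 := by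
  simp [eps]

lemma fac3_add_eps (β : Fin 3 → ℕ) (k : Fin 3) :
    fac3 (β + eps k) = ((β k : ℝ) + 1) * fac3 β := by
  fin_cases k <;> simp [fac3, eps, Nat.factorial_succ] <;> push_cast <;> ring

lemma pw_add_eps (x : Fin 3 → ℝ) (β : Fin 3 → ℕ) (k : Fin 3) :
    pw x (β + eps k) = pw x β * x k := by
  fin_cases k <;> simp [pw, eps, pow_succ] <;> ring

lemma reindex (m : ℕ) (H : Fin 3 → (Fin 3 → ℕ) → ℝ)
    (h0 : ∀ k γ, γ k = 0 → H k γ = 0) :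
    ∑ γ ∈ Finset.Nat.antidiagonalTuple 3 (m + 1), ∑ k : Fin 3, H k γ
      = ∑ k : Fin 3, ∑ β ∈ Finset.Nat.antidiagonalTuple 3 m, H k (β + eps k) := by
  rw [Finset.sum_comm]
  refine Finset.sum_congr rfl fun k _ => ?_
  have hinj : ∀ x ∈ Finset.Nat.antidiagonalTuple 3 m, ∀ y ∈ Finset.Nat.antidiagonalTuple 3 m,
      x + eps k = y + eps k → x = y := by
    intro x _ y _ h
    funext i
    have := congrFun h i
    simpa using this
  rw [← Finset.sum_image hinj]
  refine (Finset.sum_subset ?_ ?_).symm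
  · intro γ hγ
    simp only [Finset.mem_image] at hγ
    obtain ⟨β, hβ, rfl⟩ := hγ
    exact add_eps_mem k hβ
  · intro γ hγ hnot
    by_cases h : γ k = 0
    · exact h0 k γ h
    · exfalso
      apply hnot
      simp only [Finset.mem_image]
      refine ⟨γ - eps k, ?_, sub_add_eps h⟩
      rw [mem_AT] at hγ ⊢
      simp only [Pi.sub_apply]
      fin_cases k <;> simp [eps] at h ⊢ <;> omega

lemma bern_rec (r : ℕ) (δ : Fin 3 → ℝ) (g : (Fin 3 → ℕ) → ℝ) :
    ∑ γ ∈ Finset.Nat.antidiagonalTuple 3 (r + 1), g γ * Bern (r + 1) γ δ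
      = ∑ k : Fin 3, δ k * ∑ β ∈ Finset.Nat.antidiagonalTuple 3 r,
          g (β + eps k) * Bern r β δ := by
  have h0 : ∀ (k : Fin 3) (γ : Fin 3 → ℕ), γ k = 0 →
      g γ * ((γ k : ℝ) * ((r.factorial : ℝ) / fac3 γ) * pw δ γ) = 0 := by
    intro k γ h; rw [h]; simp
  calc ∑ γ ∈ Finset.Nat.antidiagonalTuple 3 (r + 1), g γ * Bern (r + 1) γ δ
      = ∑ γ ∈ Finset.Nat.antidiagonalTuple 3 (r + 1), ∑ k : Fin 3,
          g γ * ((γ k : ℝ) * ((r.factorial : ℝ) / fac3 γ) * pw δ γ) := by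
        refine Finset.sum_congr rfl fun γ hγ => ?_
        rw [mem_AT] at hγ
        have hs : (γ 0 : ℝ) + γ 1 + γ 2 = r + 1 := by exact_mod_cast hγ
        rw [Fin.sum_univ_three, Bern_eq]
        have : (((r : ℕ) + 1).factorial : ℝ) = ((r : ℝ) + 1) * r.factorial := by
          rw [Nat.factorial_succ]; push_cast; ring
        rw [this, ← hs]
        ring
    _ = ∑ k : Fin 3, ∑ β ∈ Finset.Nat.antidiagonalTuple 3 r,
          g (β + eps k) * (((β + eps k) k : ℝ) * ((r.factorial : ℝ) / fac3 (β + eps k)) *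
            pw δ (β + eps k)) := reindex r _ h0
    _ = ∑ k : Fin 3, δ k * ∑ β ∈ Finset.Nat.antidiagonalTuple 3 r,
          g (β + eps k) * Bern r β δ := by
        refine Finset.sum_congr rfl fun k _ => ?_
        rw [Finset.mul_sum]
        refine Finset.sum_congr rfl fun β _ => ?_
        rw [add_eps_apply, fac3_add_eps, pw_add_eps, Bern_eq]
        have h1 : ((β k : ℝ) + 1) ≠ 0 := by positivity
        have h2 : fac3 β ≠ 0 := fac3_ne β
        field_simp
        push_cast
        ring

noncomputable def shift (δ : Fin 3 → ℝ) (c : (Fin 3 → ℕ) → ℝ) : (Fin 3 → ℕ) → ℝ :=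
  fun β => ∑ k : Fin 3, δ k * c (β + eps k)

lemma sub_eps_apply (γ : Fin 3 → ℕ) (k i : Fin 3) :
    (γ - eps k) i = γ i - (if i = k then 1 else 0) := by
  simp [eps]

lemma hasDerivAt_sum (m : ℕ) (c : (Fin 3 → ℕ) → ℝ) (l δ : Fin 3 → ℝ) (t : ℝ) :
    HasDerivAt (fun t : ℝ => ∑ γ ∈ Finset.Nat.antidiagonalTuple 3 (m + 1),
        c γ * Bern (m + 1) γ (fun i => l i + t * δ i))
      (((m : ℝ) + 1) * ∑ β ∈ Finset.Nat.antidiagonalTuple 3 m,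
        shift δ c β * Bern m β (fun i => l i + t * δ i)) t := by
  set x : Fin 3 → ℝ := fun i => l i + t * δ i with hx
  have hxi : ∀ i : Fin 3, HasDerivAt (fun t : ℝ => l i + t * δ i) (δ i) t := by
    intro i
    simpa using ((hasDerivAt_id t).mul_const (δ i)).const_add (l i)
  have hterm : ∀ γ ∈ Finset.Nat.antidiagonalTuple 3 (m + 1),
      HasDerivAt (fun t : ℝ => c γ * Bern (m + 1) γ (fun i => l i + t * δ i))
        (∑ k : Fin 3, c γ * ((γ k : ℝ) * (((m + 1).factorial : ℝ) / fac3 γ) * δ k *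
            pw x (γ - eps k))) t := by
    intro γ _
    have hp : ∀ i : Fin 3, HasDerivAt (fun t : ℝ => (l i + t * δ i) ^ γ i)
        ((γ i : ℝ) * (l i + t * δ i) ^ (γ i - 1) * δ i) t := fun i => (hxi i).pow (γ i)
    have hprod := ((hp 0).fun_mul (hp 1)).fun_mul (hp 2)
    have h1 := (hprod.const_mul (((m + 1).factorial : ℝ) / fac3 γ)).const_mul (c γ)
    have hfeq : (fun t : ℝ => c γ * Bern (m + 1) γ (fun i => l i + t * δ i)) =
        (fun s : ℝ => c γ * ((((m + 1).factorial : ℝ) / fac3 γ) *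
          ((l 0 + s * δ 0) ^ γ 0 * (l 1 + s * δ 1) ^ γ 1 * (l 2 + s * δ 2) ^ γ 2))) := by
      funext s
      simp only [Bern_eq, pw, fac3]
      try ring
    rw [hfeq]
    refine h1.congr_deriv (Eq.symm ?_)
    rw [Fin.sum_univ_three]
    simp [pw, eps, hx]
    try ring
  have htot := HasDerivAt.fun_sum hterm
  refine htot.congr_deriv (Eq.symm ?_)
  rw [reindex m (fun k γ => c γ * ((γ k : ℝ) * (((m + 1).factorial : ℝ) / fac3 γ) * δ k *
      pw x (γ - eps k))) (by intro k γ h; simp [h])]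
  beta_reduce
  rw [Finset.mul_sum, Finset.sum_comm]
  refine Finset.sum_congr rfl fun β _ => ?_
  simp only [add_eps_sub, add_eps_apply, fac3_add_eps, shift, Bern_eq]
  rw [Finset.sum_mul, Finset.mul_sum]
  refine Finset.sum_congr rfl fun k _ => ?_
  have h1 : ((β k : ℝ) + 1) ≠ 0 := by positivity
  have h2 : fac3 β ≠ 0 := fac3_ne β
  have hfac : (((m + 1).factorial : ℝ)) = ((m : ℝ) + 1) * (m.factorial : ℝ) := by
    rw [Nat.factorial_succ]; push_cast; ring
  rw [hfac]
  field_simp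
  push_cast
  ring

lemma shift_const_mul (δ : Fin 3 → ℝ) (K : ℝ) (c : (Fin 3 → ℕ) → ℝ) :
    shift δ (fun β => K * c β) = fun β => K * shift δ c β := by
  funext β
  simp only [shift, Finset.mul_sum]
  refine Finset.sum_congr rfl fun k _ => by ring

lemma shift_iter_const_mul (δ : Fin 3 → ℝ) (K : ℝ) (r : ℕ) (c : (Fin 3 → ℕ) → ℝ) :
    (shift δ)^[r] (fun β => K * c β) = fun β => K * (shift δ)^[r] c β := by
  induction r generalizing c with
  | zero => rfl
  | succ r ih =>
    rw [Function.iterate_succ_apply, Function.iterate_succ_apply, shift_const_mul, ih]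

lemma shift_iter_eq (δ : Fin 3 → ℝ) (r : ℕ) (b : (Fin 3 → ℕ) → ℝ) (α : Fin 3 → ℕ) :
    (shift δ)^[r] b α = ∑ β ∈ Finset.Nat.antidiagonalTuple 3 r, b (α + β) * Bern r β δ := by
  induction r generalizing b α with
  | zero =>
    simp [Finset.Nat.antidiagonalTuple_zero_right, Bern]
  | succ r ih =>
    rw [Function.iterate_succ_apply']
    have : shift δ ((shift δ)^[r] b) α
        = ∑ k : Fin 3, δ k * ∑ β ∈ Finset.Nat.antidiagonalTuple 3 r,
            b (α + (β + eps k)) * Bern r β δ := by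
      rw [show shift δ ((shift δ)^[r] b) α = ∑ k : Fin 3, δ k * (shift δ)^[r] b (α + eps k)
        from rfl]
      refine Finset.sum_congr rfl fun k _ => ?_
      rw [ih]
      congr 1
      refine Finset.sum_congr rfl fun β _ => ?_
      congr 1
      rw [add_assoc, add_comm (eps k) β]
    rw [this, ← bern_rec r δ (fun γ => b (α + γ))]

lemma iter_deriv (l δ : Fin 3 → ℝ) (r : ℕ) :
    ∀ d, r ≤ d → ∀ c : (Fin 3 → ℕ) → ℝ,
    iteratedDeriv r (fun t : ℝ => ∑ γ ∈ Finset.Nat.antidiagonalTuple 3 d,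
        c γ * Bern d γ (fun i => l i + t * δ i))
      = fun t : ℝ => ((d.factorial : ℝ) / ((d - r).factorial : ℝ)) *
          ∑ β ∈ Finset.Nat.antidiagonalTuple 3 (d - r),
            (shift δ)^[r] c β * Bern (d - r) β (fun i => l i + t * δ i) := by
  induction r with
  | zero =>
    intro d _ c
    funext t
    rw [iteratedDeriv_zero]
    simp only [Nat.sub_zero]
    rw [div_self (show ((d.factorial : ℝ)) ≠ 0 from Nat.cast_ne_zero.mpr d.factorial_ne_zero),
      one_mul]
    rfl
  | succ r ih =>
    intro d hrd c
    obtain ⟨m, rfl⟩ : ∃ m, d = m + 1 := ⟨d - 1, by omega⟩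
    rw [iteratedDeriv_succ']
    have hderiv : deriv (fun t : ℝ => ∑ γ ∈ Finset.Nat.antidiagonalTuple 3 (m + 1),
        c γ * Bern (m + 1) γ (fun i => l i + t * δ i))
        = fun t : ℝ => ∑ β ∈ Finset.Nat.antidiagonalTuple 3 m,
            (((m : ℝ) + 1) * shift δ c β) * Bern m β (fun i => l i + t * δ i) := by
      funext t
      rw [(hasDerivAt_sum m c l δ t).deriv, Finset.mul_sum]
      exact Finset.sum_congr rfl fun β _ => by ring
    rw [hderiv, ih m (by omega) (fun β => ((m : ℝ) + 1) * shift δ c β)]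
    funext t
    rw [shift_iter_const_mul]
    have h1 : m + 1 - (r + 1) = m - r := by omega
    have h2 : (shift δ)^[r] (shift δ c) = (shift δ)^[r + 1] c :=
      (Function.iterate_succ_apply (shift δ) r c).symm
    rw [h2, h1, Finset.mul_sum, Finset.mul_sum]
    refine Finset.sum_congr rfl fun β _ => ?_
    have hfac : (((m + 1).factorial : ℝ)) = ((m : ℝ) + 1) * (m.factorial : ℝ) := by
      rw [Nat.factorial_succ]; push_cast; ring
    rw [hfac]
    ring

theorem stmt8 (d r : ℕ) (hrd : r ≤ d) (b : (Fin 3 → ℕ) → ℝ)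
    (l δ : Fin 3 → ℝ) (hl : l 0 + l 1 + l 2 = 1) (hδ : δ 0 + δ 1 + δ 2 = 0) :
    iteratedDeriv r
        (fun t : ℝ => ∑ a ∈ Finset.Nat.antidiagonalTuple 3 d,
          b a * Bern d a (fun i => l i + t * δ i)) 0 =
      ∑ a ∈ Finset.Nat.antidiagonalTuple 3 (d - r),
        ((Nat.factorial d : ℝ) / (Nat.factorial (d - r) : ℝ)) *
          (∑ β ∈ Finset.Nat.antidiagonalTuple 3 r, b (a + β) * Bern r β δ) *
          Bern (d - r) a l := by
  have h := congrFun (iter_deriv l δ r d hrd b) 0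
  rw [h, Finset.mul_sum]
  refine Finset.sum_congr rfl fun a _ => ?_
  rw [shift_iter_eq]
  have hx : (fun i => l i + (0 : ℝ) * δ i) = l := funext fun i => by ring
  rw [hx]
  ring
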